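/- Let H₀ := b ⊕ ⨁_{α∈Π} g_{-α} and H₀ˣ := b + Σ_{α∈Π} g_{-α}ˣ (elements of H₀ whose g_{-α}-component is nonzero for every simple root α). Then B · S_reg = H₀ˣ, i.e., the set of all Ad_b(s) with b ∈ B and s ∈ S_reg equals H₀ˣ. (This uses Kostant's isomorphism U · S_reg = ξ + b.) -/
import Mathlib


/-- With `H₀ = b ⊕ ⨁_{α∈Π} g_{-α}` and
`H₀ˣ = b + Σ_{α∈Π} g_{-α}ˣ`, one has `B · S_reg = H₀ˣ`:
`{Ad_b(s) : b ∈ B, s ∈ S_reg} = H₀ˣ`, where `S_reg = ξ + ker(ad_η)`.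
(Kostant's isomorphism `U · S_reg = ξ + b` is the hypothesis `hKostant`.) -/
theorem stmt16
    (L : Type) [LieRing L] [LieAlgebra ℂ L]
    (G : Type) [Group G]
    (Ad : G →* (L ≃ₗ[ℂ] L))
    (B U T : Subgroup G) (hUB : U ≤ B) (hTB : T ≤ B)
    (hBdec : ∀ bb ∈ B, ∃ s ∈ T, ∃ uu ∈ U, bb = s * uu)  -- B = T ⋉ U
    (σ : Type) [Fintype σ]
    (bsub : Submodule ℂ L)
    (eneg : σ → L)
    (ξ η : L) (hξ : ξ = ∑ a, eneg a)
    (χ : σ → G → ℂ)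
    (hT_b : ∀ s ∈ T, ∀ y ∈ bsub, Ad s y ∈ bsub)
    (hT_neg : ∀ s ∈ T, ∀ a, Ad s (eneg a) = (χ a s)⁻¹ • eneg a)
    (hχ0 : ∀ s ∈ T, ∀ a, χ a s ≠ 0)
    (hTsurj : ∀ c : σ → ℂ, (∀ a, c a ≠ 0) → ∃ s ∈ T, ∀ a, χ a s = c a)
    -- Kostant: U · S_reg = ξ + b
    (hKostant : {x : L | ∃ uu ∈ U, ∃ w : L, ⁅η, w⁆ = 0 ∧ x = Ad uu (ξ + w)}
        = {x : L | ∃ y ∈ bsub, x = ξ + y}) :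
    {x : L | ∃ bb ∈ B, ∃ w : L, ⁅η, w⁆ = 0 ∧ x = Ad bb (ξ + w)}
      = {x : L | ∃ y ∈ bsub, ∃ c : σ → ℂ, (∀ a, c a ≠ 0) ∧ x = y + ∑ a, c a • eneg a} := by
  ext x
  simp only [Set.mem_setOf_eq]
  constructor
  · rintro ⟨bb, hbb, w, hw, rfl⟩
    obtain ⟨s, hs, uu, hu, rfl⟩ := hBdec bb hbb
    have hK : Ad uu (ξ + w) ∈ {x : L | ∃ y ∈ bsub, x = ξ + y} := by
      rw [← hKostant]; exact ⟨uu, hu, w, hw, rfl⟩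
    obtain ⟨y, hy, hxy⟩ := hK
    refine ⟨Ad s y, hT_b s hs y hy, fun a => (χ a s)⁻¹,
      fun a => inv_ne_zero (hχ0 s hs a), ?_⟩
    have hmul : Ad (s * uu) (ξ + w) = Ad s (Ad uu (ξ + w)) := by
      rw [map_mul]; rfl
    rw [hmul, hxy, map_add, hξ, map_sum]
    simp only [hT_neg s hs]
    rw [add_comm]
  · rintro ⟨y, hy, c, hc, rfl⟩
    obtain ⟨s, hs, hχs⟩ := hTsurj (fun a => (c a)⁻¹) (fun a => inv_ne_zero (hc a))
    have hz : Ad s⁻¹ y ∈ bsub := hT_b s⁻¹ (inv_mem hs) y hy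
    have hK : ξ + Ad s⁻¹ y ∈
        {x : L | ∃ uu ∈ U, ∃ w : L, ⁅η, w⁆ = 0 ∧ x = Ad uu (ξ + w)} := by
      rw [hKostant]; exact ⟨Ad s⁻¹ y, hz, rfl⟩
    obtain ⟨uu, hu, w, hw, hx⟩ := hK
    refine ⟨s * uu, B.mul_mem (hTB hs) (hUB hu), w, hw, ?_⟩
    have hmul : Ad (s * uu) (ξ + w) = Ad s (Ad uu (ξ + w)) := by
      rw [map_mul]; rfl
    rw [hmul, ← hx, map_add, hξ, map_sum]
    have hinv : Ad s (Ad s⁻¹ y) = y := by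
      have h1 : Ad (s * s⁻¹) y = Ad s (Ad s⁻¹ y) := by rw [map_mul]; rfl
      rw [← h1, mul_inv_cancel, map_one]; rfl
    simp only [hT_neg s hs, hχs, inv_inv]
    rw [hinv, add_comm]
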